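/- Counting lemma for dyadic intervals with bounded overlap: fix ℓ ≥ 0 and let Ω ⊆ ℝ be an open set. Let 𝓘_ℓ be the set of dyadic intervals I such that 2^ℓ I ⊆ Ω but 2^{ℓ+1} I ⊄ Ω (dilations with respect to the center). Then for any dyadic I ∈ 𝓘_ℓ and any j > 0, there are at most 2 intervals I' ∈ 𝓘_ℓ with I' ⊆ I and |I'| = 2^{-j}|I|; consequently ∑_{I ∈ 𝓘_ℓ} |I| ≤ C |Ω| for an absolute constant C. -/

import Mathlib

open MeasureTheory
open scoped ENNReal

/-- The dyadic interval `[2^k m, 2^k (m+1))`. -/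
def dyadicI (k m : ℤ) : Set ℝ := Set.Ico ((2 : ℝ) ^ k * m) ((2 : ℝ) ^ k * (m + 1))

/-- The `2^j`-dilate (with respect to its center) of the dyadic interval `[2^k m, 2^k(m+1))`. -/
def dilI (j : ℕ) (k m : ℤ) : Set ℝ :=
  Set.Ico ((2 : ℝ) ^ k * ((m : ℝ) + 1 / 2) - (2 : ℝ) ^ (j : ℤ) * (2 : ℝ) ^ k / 2)
    ((2 : ℝ) ^ k * ((m : ℝ) + 1 / 2) + (2 : ℝ) ^ (j : ℤ) * (2 : ℝ) ^ k / 2)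

/-- The collection `𝓘_ℓ` of dyadic intervals `I` (indexed by `(k,m)`) with
`2^ℓ I ⊆ Ω` but `2^{ℓ+1} I ⊄ Ω`. -/
def dyadicFamily (ℓ : ℕ) (Ω : Set ℝ) : Set (ℤ × ℤ) :=
  {p | dilI ℓ p.1 p.2 ⊆ Ω ∧ ¬ dilI (ℓ + 1) p.1 p.2 ⊆ Ω}

lemma two_zpow_pos (k : ℤ) : (0:ℝ) < (2:ℝ) ^ k := zpow_pos two_pos k

lemma one_le_two_zpow (ℓ : ℕ) : (1:ℝ) ≤ (2:ℝ) ^ (ℓ : ℤ) := by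
  rw [zpow_natCast]
  exact one_le_pow₀ one_le_two

lemma dyadicI_subset_dilI (ℓ : ℕ) (k m : ℤ) : dyadicI k m ⊆ dilI ℓ k m := by
  have hr := two_zpow_pos k
  have hA := one_le_two_zpow ℓ
  apply Set.Ico_subset_Ico <;>
    nlinarith [mul_nonneg (sub_nonneg.2 hA) hr.le]

lemma zpow_split (k k' : ℤ) (h : k' ≤ k) :
    (2:ℝ) ^ k = (2:ℝ) ^ k' * ((2 ^ (k - k').toNat : ℤ) : ℝ) := by
  have h2 : ((k - k').toNat : ℤ) = k - k' := Int.toNat_of_nonneg (by omega)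
  push_cast
  rw [← zpow_natCast (2:ℝ) (k - k').toNat, ← zpow_add₀ (two_ne_zero) k', h2]
  ring_nf

lemma dyadicI_nesting {k k' m m' : ℤ} (hkk : k' ≤ k)
    (h : (dyadicI k' m' ∩ dyadicI k m).Nonempty) :
    dyadicI k' m' ⊆ dyadicI k m := by
  obtain ⟨x, hx', hx⟩ := h
  simp only [dyadicI, Set.mem_Ico] at hx hx'
  have hr' := two_zpow_pos k'
  have hsplit := zpow_split k k' hkk
  set B : ℤ := 2 ^ (k - k').toNat with hB
  have hint1 : B * m ≤ m' := by
    have h1 : (2:ℝ) ^ k' * ((B : ℝ) * m) < (2:ℝ) ^ k' * ((m' : ℝ) + 1) := by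
      have he : (2:ℝ) ^ k' * ((B:ℝ) * m) = (2:ℝ) ^ k * m := by rw [hsplit]; ring
      rw [he]; exact lt_of_le_of_lt hx.1 hx'.2
    have h2 := (mul_lt_mul_iff_right₀ hr').1 h1
    have h3 : (B * m : ℤ) < m' + 1 := by exact_mod_cast h2
    omega
  have hint2 : m' + 1 ≤ B * (m + 1) := by
    have h1 : (2:ℝ) ^ k' * (m' : ℝ) < (2:ℝ) ^ k' * ((B:ℝ) * (m + 1)) := by
      have he : (2:ℝ) ^ k' * ((B:ℝ) * (m+1)) = (2:ℝ) ^ k * (m+1) := by rw [hsplit]; ring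
      rw [he]; exact lt_of_le_of_lt hx'.1 hx.2
    have h2 := (mul_lt_mul_iff_right₀ hr').1 h1
    have h3 : m' < (B * (m+1) : ℤ) := by exact_mod_cast h2
    omega
  apply Set.Ico_subset_Ico
  · have hle : (2:ℝ) ^ k' * ((B:ℝ) * m) ≤ (2:ℝ) ^ k' * m' := by
      apply mul_le_mul_of_nonneg_left _ hr'.le
      exact_mod_cast hint1
    calc (2:ℝ) ^ k * m = (2:ℝ) ^ k' * ((B:ℝ) * m) := by rw [hsplit]; ring
      _ ≤ _ := hle
  · have hle : (2:ℝ) ^ k' * ((m':ℝ) + 1) ≤ (2:ℝ) ^ k' * ((B:ℝ) * (m+1)) := by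
      apply mul_le_mul_of_nonneg_left _ hr'.le
      exact_mod_cast hint2
    calc (2:ℝ) ^ k' * ((m':ℝ)+1) ≤ (2:ℝ) ^ k' * ((B:ℝ) * (m+1)) := hle
      _ = (2:ℝ) ^ k * (m+1) := by rw [hsplit]; ring

lemma dyadicI_sub_scale {k k' m m' : ℤ} (h : dyadicI k' m' ⊆ dyadicI k m) : k' ≤ k := by
  have hr' := two_zpow_pos k'
  have hne : (2:ℝ) ^ k' * m' < (2:ℝ) ^ k' * (m' + 1) := by
    apply mul_lt_mul_of_pos_left _ hr'; linarith
  obtain ⟨h1, h2⟩ := (Set.Ico_subset_Ico_iff hne).1 h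
  have hlen : (2:ℝ) ^ k' ≤ (2:ℝ) ^ k := by nlinarith
  exact_mod_cast (zpow_le_zpow_iff_right₀ (by norm_num : (1:ℝ) < 2)).1 hlen

lemma dyadicI_sub_same {k m m' : ℤ} (h : dyadicI k m' ⊆ dyadicI k m) : m' = m := by
  have hr := two_zpow_pos k
  have hne : (2:ℝ) ^ k * m' < (2:ℝ) ^ k * (m' + 1) := by
    apply mul_lt_mul_of_pos_left _ hr; linarith
  obtain ⟨h1, h2⟩ := (Set.Ico_subset_Ico_iff hne).1 h
  have e1 : (m:ℝ) ≤ m' := by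
    have := (mul_le_mul_iff_right₀ hr).1 h1; exact_mod_cast this
  have e2 : (m':ℝ) + 1 ≤ (m:ℝ) + 1 := by
    have := (mul_le_mul_iff_right₀ hr).1 h2; exact_mod_cast this
  have f1 : m ≤ m' := by exact_mod_cast e1
  have f2 : m' ≤ m := by
    have : (m':ℝ) ≤ m := by linarith
    exact_mod_cast this
  omega

/-- Core counting lemma: a member of the family at scale `k - j` contained in a member at
scale `k` must be one of the two extreme subintervals. -/
lemma dyadic_core {ℓ : ℕ} {Ω : Set ℝ} {k m j m' : ℤ}
    (hq : (k, m) ∈ dyadicFamily ℓ Ω) (hp : (k - j, m') ∈ dyadicFamily ℓ Ω)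
    (hj : 0 < j) (hsub : dyadicI (k - j) m' ⊆ dyadicI k m) :
    m' = 2 ^ j.toNat * m ∨ m' = 2 ^ j.toNat * (m + 1) - 1 := by
  by_contra hcon
  push_neg at hcon
  have hkk : k - j ≤ k := by omega
  have hsplit := zpow_split k (k - j) hkk
  have hjn : (k - (k - j)).toNat = j.toNat := by omega
  rw [hjn] at hsplit
  set n := j.toNat with hn
  set B : ℤ := 2 ^ n with hB
  set r : ℝ := (2:ℝ) ^ (k - j) with hrdef
  have hr : (0:ℝ) < r := two_zpow_pos _
  have hBR : (2:ℝ) ^ k = r * (B:ℝ) := hsplit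
  have hB2 : (2:ℤ) ≤ B := by
    rw [hB]
    calc (2:ℤ) = 2 ^ 1 := by norm_num
      _ ≤ 2 ^ n := by apply pow_le_pow_right₀ (by norm_num); omega
  have hB2R : (2:ℝ) ≤ (B:ℝ) := by exact_mod_cast hB2
  have hne : r * (m':ℝ) < r * ((m':ℝ) + 1) := by nlinarith
  obtain ⟨h1, h2⟩ := (Set.Ico_subset_Ico_iff hne).1 hsub
  have hint1 : B * m ≤ m' := by
    have hh : r * ((B:ℝ) * m) ≤ r * m' := by
      calc r * ((B:ℝ)*m) = (2:ℝ)^k * m := by rw [hBR]; ring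
        _ ≤ r * m' := h1
    have := (mul_le_mul_iff_right₀ hr).1 hh
    exact_mod_cast this
  have hint2 : m' + 1 ≤ B * (m + 1) := by
    have hh : r * ((m':ℝ) + 1) ≤ r * ((B:ℝ) * (m+1)) := by
      calc r * ((m':ℝ)+1) ≤ (2:ℝ)^k * (m+1) := h2
        _ = r * ((B:ℝ)*(m+1)) := by rw [hBR]; ring
    have := (mul_le_mul_iff_right₀ hr).1 hh
    exact_mod_cast this
  have hs1 : B * m + 1 ≤ m' := by rcases hcon with ⟨c1, _⟩; omega
  have hs2 : m' ≤ B * (m + 1) - 2 := by rcases hcon with ⟨_, c2⟩; omega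
  have hm1 : (B:ℝ) * m + 1 ≤ (m':ℝ) := by exact_mod_cast hs1
  have hm2 : (m':ℝ) ≤ (B:ℝ) * ((m:ℝ)+1) - 2 := by exact_mod_cast hs2
  apply hp.2
  refine subset_trans ?_ hq.1
  have hA := one_le_two_zpow ℓ
  set A : ℝ := (2:ℝ) ^ (ℓ:ℤ) with hAdef
  have hA1 : (2:ℝ) ^ ((ℓ + 1 : ℕ) : ℤ) = 2 * A := by
    rw [hAdef]
    push_cast
    rw [zpow_add₀ (two_ne_zero : (2:ℝ) ≠ 0)]
    ring
  simp only [dilI]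
  apply Set.Ico_subset_Ico
  · rw [hA1, hBR]
    nlinarith [mul_nonneg (mul_nonneg hr.le (sub_nonneg.2 hA)) (sub_nonneg.2 hB2R),
      mul_nonneg hr.le (by linarith : (0:ℝ) ≤ (m':ℝ) - ((B:ℝ)*m + 1))]
  · rw [hA1, hBR]
    nlinarith [mul_nonneg (mul_nonneg hr.le (sub_nonneg.2 hA)) (sub_nonneg.2 hB2R),
      mul_nonneg hr.le (by linarith : (0:ℝ) ≤ (B:ℝ)*((m:ℝ)+1) - 2 - (m':ℝ))]

lemma geom_Ico (a : ℤ) : ∀ b : ℤ, a ≤ b → ∑ k ∈ Finset.Ico a b, (2:ℝ) ^ k = 2 ^ b - 2 ^ a := by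
  refine Int.le_induction ?_ ?_
  · simp
  · intro b hb ih
    have hins : Finset.Ico a (b+1) = insert b (Finset.Ico a b) := by
      ext x; simp only [Finset.mem_Ico, Finset.mem_insert]; omega
    rw [hins, Finset.sum_insert (by simp), ih, zpow_add₀ (two_ne_zero : (2:ℝ) ≠ 0) b 1]
    ring

lemma sum_biUnion_le'' {α β : Type*} [DecidableEq α] [DecidableEq β] (s : Finset α)
    (t : α → Finset β) (f : β → ℝ≥0∞) :
    ∑ x ∈ s.biUnion t, f x ≤ ∑ a ∈ s, ∑ x ∈ t a, f x := by
  classical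
  induction s using Finset.induction_on with
  | empty => simp
  | insert a s ha ih =>
      rename_i a s
      rw [Finset.biUnion_insert, Finset.sum_insert ha]
      calc ∑ x ∈ t a ∪ s.biUnion t, f x
          ≤ ∑ x ∈ t a ∪ s.biUnion t, f x + ∑ x ∈ t a ∩ s.biUnion t, f x := le_self_add
        _ = ∑ x ∈ t a, f x + ∑ x ∈ s.biUnion t, f x := Finset.sum_union_inter
        _ ≤ _ := add_le_add_right ih _

lemma local_sum {ℓ : ℕ} {Ω : Set ℝ} {q : ℤ × ℤ} (hq : q ∈ dyadicFamily ℓ Ω)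
    (T : Finset (ℤ × ℤ))
    (hT : ∀ p ∈ T, p ∈ dyadicFamily ℓ Ω ∧ dyadicI p.1 p.2 ⊆ dyadicI q.1 q.2) :
    ∑ p ∈ T, (2:ℝ) ^ p.1 ≤ 3 * 2 ^ q.1 := by
  classical
  set E := T.erase q with hE
  have hlt : ∀ p ∈ E, p.1 < q.1 := by
    intro p hp
    have hps := hT p (Finset.mem_of_mem_erase hp)
    have hle := dyadicI_sub_scale hps.2
    rcases lt_or_eq_of_le hle with h | h
    · exact h
    · exfalso
      apply Finset.ne_of_mem_erase hp
      have hsub := hps.2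
      rw [← h] at hsub
      exact Prod.ext h (dyadicI_sub_same hsub)
  have hEbound : ∑ p ∈ E, (2:ℝ) ^ p.1 ≤ 2 * 2 ^ q.1 := by
    have hcomp := Finset.sum_comp (fun k : ℤ => (2:ℝ) ^ k) (Prod.fst : ℤ × ℤ → ℤ) (s := E)
    rw [hcomp]
    set K := E.image Prod.fst with hK
    have hKlt : ∀ k' ∈ K, k' < q.1 := by
      intro k' hk'
      obtain ⟨p, hp, hpk⟩ := Finset.mem_image.1 hk'
      exact hpk ▸ hlt p hp
    have hcard : ∀ k' ∈ K, (E.filter (fun p => p.1 = k')).card ≤ 2 := by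
      intro k' hk'
      set j := q.1 - k' with hj
      have hj0 : 0 < j := by have := hKlt k' hk'; omega
      have hfsub : E.filter (fun p => p.1 = k') ⊆
          {(k', 2 ^ j.toNat * q.2), (k', 2 ^ j.toNat * (q.2 + 1) - 1)} := by
        intro p hp
        obtain ⟨hpE, hpk⟩ := Finset.mem_filter.1 hp
        have hps := hT p (Finset.mem_of_mem_erase hpE)
        have hqq : (q.1, q.2) ∈ dyadicFamily ℓ Ω := by simpa using hq
        have hkj : q.1 - j = p.1 := by omega
        have hpf : (q.1 - j, p.2) ∈ dyadicFamily ℓ Ω := by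
          rw [hkj]; simpa using hps.1
        have hsub : dyadicI (q.1 - j) p.2 ⊆ dyadicI q.1 q.2 := by
          rw [hkj]; exact hps.2
        rcases dyadic_core hqq hpf hj0 hsub with h | h <;>
          · simp only [Finset.mem_insert, Finset.mem_singleton]
            first
              | exact Or.inl (Prod.ext hpk h)
              | exact Or.inr (Prod.ext hpk h)
      calc (E.filter (fun p => p.1 = k')).card ≤ _ := Finset.card_le_card hfsub
        _ ≤ 2 := Finset.card_insert_le _ _ |>.trans (by simp)
    calc ∑ k' ∈ K, (E.filter (fun p => p.1 = k')).card • (2:ℝ) ^ k'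
        ≤ ∑ k' ∈ K, 2 * (2:ℝ) ^ k' := by
          apply Finset.sum_le_sum
          intro k' hk'
          rw [nsmul_eq_mul]
          apply mul_le_mul_of_nonneg_right _ (two_zpow_pos k').le
          exact_mod_cast hcard k' hk'
      _ = 2 * ∑ k' ∈ K, (2:ℝ) ^ k' := (Finset.mul_sum _ _ _).symm
      _ ≤ 2 * 2 ^ q.1 := by
          rcases K.eq_empty_or_nonempty with h | h
          · simp [h]; positivity
          · apply mul_le_mul_of_nonneg_left _ (by norm_num : (0:ℝ) ≤ 2)
            have hmin : K.min' h ≤ q.1 := le_of_lt (hKlt _ (K.min'_mem h))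
            have hsubK : K ⊆ Finset.Ico (K.min' h) q.1 := by
              intro k' hk'
              rw [Finset.mem_Ico]
              exact ⟨K.min'_le _ hk', hKlt _ hk'⟩
            calc ∑ k' ∈ K, (2:ℝ) ^ k'
                ≤ ∑ k' ∈ Finset.Ico (K.min' h) q.1, (2:ℝ) ^ k' :=
                  Finset.sum_le_sum_of_subset_of_nonneg hsubK
                    (fun i _ _ => (two_zpow_pos i).le)
              _ = 2 ^ q.1 - 2 ^ (K.min' h) := geom_Ico _ _ hmin
              _ ≤ 2 ^ q.1 := by linarith [two_zpow_pos (K.min' h)]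
  by_cases hqT : q ∈ T
  · have hadd := Finset.add_sum_erase T (fun p : ℤ × ℤ => (2:ℝ) ^ p.1) hqT
    rw [← hadd, ← hE]
    linarith
  · rw [hE, Finset.erase_eq_of_notMem hqT] at hEbound
    linarith [two_zpow_pos q.1]

/-- Counting lemma for dyadic intervals with bounded overlap: within any `I ∈ 𝓘_ℓ` there are
at most 2 intervals of `𝓘_ℓ` of each fixed smaller scale, and `∑_{I ∈ 𝓘_ℓ} |I| ≤ C |Ω|`. -/
theorem dyadic_counting_lemma :
    ∃ C : ℝ, 0 < C ∧ ∀ (ℓ : ℕ) (Ω : Set ℝ), IsOpen Ω →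
      (∀ k m : ℤ, (k, m) ∈ dyadicFamily ℓ Ω → ∀ j : ℤ, 0 < j →
        ∀ S : Finset ℤ,
          (∀ m' ∈ S, (k - j, m') ∈ dyadicFamily ℓ Ω ∧ dyadicI (k - j) m' ⊆ dyadicI k m) →
          S.card ≤ 2) ∧
      (∀ S : Finset (ℤ × ℤ), (∀ p ∈ S, p ∈ dyadicFamily ℓ Ω) →
        ∑ p ∈ S, ENNReal.ofReal ((2 : ℝ) ^ p.1) ≤ ENNReal.ofReal C * volume Ω) := by
  classical
  refine ⟨3, by norm_num, fun ℓ Ω _hΩ => ⟨?_, ?_⟩⟩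
  · intro k m hkm j hj S hS
    have hsub : S ⊆ ({2 ^ j.toNat * m, 2 ^ j.toNat * (m + 1) - 1} : Finset ℤ) := by
      intro m' hm'
      obtain ⟨h1, h2⟩ := hS m' hm'
      rcases dyadic_core hkm h1 hj h2 with h | h <;> simp [h]
    exact (Finset.card_le_card hsub).trans ((Finset.card_insert_le _ _).trans (by simp))
  · intro S hS
    set M := S.filter (fun p => ∀ r ∈ S, dyadicI p.1 p.2 ⊆ dyadicI r.1 r.2 → r = p) with hM
    have hMS : M ⊆ S := Finset.filter_subset _ _
    have hMmax : ∀ q ∈ M, ∀ r ∈ S, dyadicI q.1 q.2 ⊆ dyadicI r.1 r.2 → r = q :=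
      fun q hq => (Finset.mem_filter.1 hq).2
    have hmaxex : ∀ p ∈ S, ∃ q ∈ M, dyadicI p.1 p.2 ⊆ dyadicI q.1 q.2 := by
      intro p hp
      set T := S.filter (fun r => dyadicI p.1 p.2 ⊆ dyadicI r.1 r.2) with hT
      have hTne : T.Nonempty := ⟨p, Finset.mem_filter.2 ⟨hp, subset_rfl⟩⟩
      obtain ⟨q, hqT, hqmax⟩ := Finset.exists_max_image T Prod.fst hTne
      obtain ⟨hqS, hpq⟩ := Finset.mem_filter.1 hqT
      refine ⟨q, ?_, hpq⟩
      rw [hM, Finset.mem_filter]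
      refine ⟨hqS, ?_⟩
      intro r hr hqr
      have hpr : dyadicI p.1 p.2 ⊆ dyadicI r.1 r.2 := hpq.trans hqr
      have hrT : r ∈ T := Finset.mem_filter.2 ⟨hr, hpr⟩
      have h1 : r.1 ≤ q.1 := hqmax r hrT
      have h2 : q.1 ≤ r.1 := dyadicI_sub_scale hqr
      have heq : q.1 = r.1 := le_antisymm h2 h1
      rw [← heq] at hqr
      exact Prod.ext heq.symm (dyadicI_sub_same hqr).symm
    have hdisj : (M : Set (ℤ × ℤ)).PairwiseDisjoint (fun q => dyadicI q.1 q.2) := by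
      have key : ∀ q ∈ M, ∀ r ∈ M, q.1 ≤ r.1 →
          ¬ Disjoint (dyadicI q.1 q.2) (dyadicI r.1 r.2) → q = r := by
        intro q hq r hr hle hnd
        rw [Set.not_disjoint_iff_nonempty_inter] at hnd
        have hsub := dyadicI_nesting hle hnd
        exact (hMmax q hq r (hMS hr) hsub).symm
      intro q hq r hr hne
      rw [Finset.mem_coe] at hq hr
      by_contra hnd
      rcases le_total q.1 r.1 with h | h
      · exact hne (key q hq r hr h hnd)
      · exact hne ((key r hr q hq h (fun hd => hnd hd.symm)).symm)
    have hvol : ∀ k m : ℤ, volume (dyadicI k m) = ENNReal.ofReal ((2:ℝ) ^ k) := by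
      intro k m
      simp only [dyadicI, Real.volume_Ico]
      congr 1
      ring
    have hSsub : S ⊆ M.biUnion
        (fun q => S.filter (fun p => dyadicI p.1 p.2 ⊆ dyadicI q.1 q.2)) := by
      intro p hp
      obtain ⟨q, hq, hpq⟩ := hmaxex p hp
      exact Finset.mem_biUnion.2 ⟨q, hq, Finset.mem_filter.2 ⟨hp, hpq⟩⟩
    calc ∑ p ∈ S, ENNReal.ofReal ((2:ℝ) ^ p.1)
        ≤ ∑ p ∈ M.biUnion (fun q => S.filter (fun p => dyadicI p.1 p.2 ⊆ dyadicI q.1 q.2)),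
            ENNReal.ofReal ((2:ℝ) ^ p.1) := Finset.sum_le_sum_of_subset hSsub
      _ ≤ ∑ q ∈ M, ∑ p ∈ S.filter (fun p => dyadicI p.1 p.2 ⊆ dyadicI q.1 q.2),
            ENNReal.ofReal ((2:ℝ) ^ p.1) := sum_biUnion_le'' _ _ _
      _ ≤ ∑ q ∈ M, ENNReal.ofReal 3 * ENNReal.ofReal ((2:ℝ) ^ q.1) := by
          apply Finset.sum_le_sum
          intro q hqM
          have hqF := hS q (hMS hqM)
          have hloc := local_sum hqF (S.filter (fun p => dyadicI p.1 p.2 ⊆ dyadicI q.1 q.2))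
            (fun p hp => ⟨hS p (Finset.mem_filter.1 hp).1, (Finset.mem_filter.1 hp).2⟩)
          rw [← ENNReal.ofReal_sum_of_nonneg (fun p _ => (two_zpow_pos p.1).le),
            ← ENNReal.ofReal_mul (by norm_num : (0:ℝ) ≤ 3)]
          exact ENNReal.ofReal_le_ofReal hloc
      _ = ENNReal.ofReal 3 * ∑ q ∈ M, volume (dyadicI q.1 q.2) := by
          rw [Finset.mul_sum]
          exact Finset.sum_congr rfl (fun q _ => by rw [hvol])
      _ = ENNReal.ofReal 3 * volume (⋃ q ∈ M, dyadicI q.1 q.2) := by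
          rw [measure_biUnion_finset hdisj
            (fun q _ => by simp only [dyadicI]; exact measurableSet_Ico)]
      _ ≤ ENNReal.ofReal 3 * volume Ω := by
          apply mul_le_mul_right
          apply measure_mono
          apply Set.iUnion₂_subset
          intro q hqM
          exact (dyadicI_subset_dilI ℓ q.1 q.2).trans (hS q (hMS hqM)).1
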